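/- Let S be a finite nonempty set of points in the plane, D a point and d a real number with 0 < d and d ≤ dist(p, D) for every p ∈ S. For p ∈ S let p' := p + (d / dist(p, D)) • (D − p); that is, p' is the point at distance d from p on the segment from p to D. Suppose c is a point and r a real number such that dist(p, c) ≤ r for all p ∈ S. Then there exists a point c' such that dist(p', c') ≤ r for every p ∈ S. (Moving all points of a set a common distance d towards a point D, without overshooting, never increases the minimum enclosing radius.) -/

import Mathlib

open RealInnerProductSpace

lemma scalar_key (d x y s t ip : ℝ) (hd : 0 < d)
    (hx : 0 ≤ x) (hy : 0 ≤ y)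
    (hs : s = 1 - d / max x d) (ht : t = 1 - d / max y d)
    (hip : |ip| ≤ x * y) :
    s^2*x^2 - 2*(s*t)*ip + t^2*y^2 ≤ x^2 - 2*ip + y^2 := by
  have hip1 : ip ≤ x * y := (abs_le.1 hip).2
  have hip2 : -(x*y) ≤ ip := (abs_le.1 hip).1
  rcases le_total x d with hxd | hxd <;> rcases le_total y d with hyd | hyd
  · rw [max_eq_right hxd, div_self hd.ne'] at hs
    rw [max_eq_right hyd, div_self hd.ne'] at ht
    rw [hs, ht]; nlinarith [sq_nonneg (x - y)]
  · rw [max_eq_right hxd, div_self hd.ne'] at hs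
    rw [max_eq_left hyd] at ht
    have hy0 : 0 < y := lt_of_lt_of_le hd hyd
    have hty : t * y = y - d := by rw [ht]; field_simp
    have ht0 : 0 ≤ t := by rw [ht]; have : d / y ≤ 1 := (div_le_one hy0).2 hyd; linarith
    have ht1 : t ≤ 1 := by rw [ht]; have : 0 ≤ d / y := div_nonneg hd.le hy0.le; linarith
    rw [hs]; nlinarith [mul_nonneg (sub_nonneg.2 ht1) (sub_nonneg.2 hip1)]
  · rw [max_eq_right hyd, div_self hd.ne'] at ht
    rw [max_eq_left hxd] at hs
    have hx0 : 0 < x := lt_of_lt_of_le hd hxd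
    have hsx : s * x = x - d := by rw [hs]; field_simp
    have hs0 : 0 ≤ s := by rw [hs]; have : d / x ≤ 1 := (div_le_one hx0).2 hxd; linarith
    have hs1 : s ≤ 1 := by rw [hs]; have : 0 ≤ d / x := div_nonneg hd.le hx0.le; linarith
    rw [ht]; nlinarith [mul_nonneg (sub_nonneg.2 hs1) (sub_nonneg.2 hip1)]
  · rw [max_eq_left hxd] at hs
    rw [max_eq_left hyd] at ht
    have hx0 : 0 < x := lt_of_lt_of_le hd hxd
    have hy0 : 0 < y := lt_of_lt_of_le hd hyd
    have hsx : s * x = x - d := by rw [hs]; field_simp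
    have hty : t * y = y - d := by rw [ht]; field_simp
    have hs0 : 0 ≤ s := by rw [hs]; have : d / x ≤ 1 := (div_le_one hx0).2 hxd; linarith
    have hs1 : s ≤ 1 := by rw [hs]; have : 0 ≤ d / x := div_nonneg hd.le hx0.le; linarith
    have ht0 : 0 ≤ t := by rw [ht]; have : d / y ≤ 1 := (div_le_one hy0).2 hyd; linarith
    have ht1 : t ≤ 1 := by rw [ht]; have : 0 ≤ d / y := div_nonneg hd.le hy0.le; linarith
    nlinarith [mul_nonneg (mul_nonneg hs0 ht0) (sub_nonneg.2 hip1),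
      sub_nonneg.2 hip1, mul_nonneg hs0 ht0,
      mul_nonneg (sub_nonneg.2 (mul_le_one₀ hs1 ht0 ht1 : s*t ≤ 1)) (sub_nonneg.2 hip1)]

lemma shrink_lipschitz (d : ℝ) (hd : 0 < d) (v w : EuclideanSpace ℝ (Fin 2)) :
    ‖(1 - d / max ‖v‖ d) • v - (1 - d / max ‖w‖ d) • w‖ ≤ ‖v - w‖ := by
  set s := 1 - d / max ‖v‖ d with hs
  set t := 1 - d / max ‖w‖ d with ht
  rw [← Real.sqrt_sq (norm_nonneg (s • v - t • w)), ← Real.sqrt_sq (norm_nonneg (v - w))]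
  apply Real.sqrt_le_sqrt
  rw [norm_sub_sq_real, norm_sub_sq_real, norm_smul, norm_smul,
    real_inner_smul_left, real_inner_smul_right]
  have key := scalar_key d ‖v‖ ‖w‖ s t ((inner ℝ v w : ℝ)) hd (norm_nonneg v) (norm_nonneg w)
    hs ht (abs_real_inner_le_norm v w)
  simp only [Real.norm_eq_abs, mul_pow, sq_abs]
  ring_nf at key ⊢
  linarith [key]

/-- Moving every point of `S` a common distance `d` straight towards a point `D`
(without overshooting) never increases the enclosing radius. -/
theorem shrink_towards_point_general
    (S : Finset (EuclideanSpace ℝ (Fin 2))) (hS : S.Nonempty)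
    (D : EuclideanSpace ℝ (Fin 2)) (d : ℝ) (hd : 0 < d)
    (hdist : ∀ p ∈ S, d ≤ dist p D)
    (c : EuclideanSpace ℝ (Fin 2)) (r : ℝ)
    (hc : ∀ p ∈ S, dist p c ≤ r) :
    ∃ c' : EuclideanSpace ℝ (Fin 2),
      ∀ p ∈ S, dist (p + (d / dist p D) • (D - p)) c' ≤ r := by
  refine ⟨D + (1 - d / max ‖c - D‖ d) • (c - D), fun p hp => ?_⟩
  have hpd : d ≤ ‖p - D‖ := by
    simpa [dist_eq_norm] using hdist p hp
  have hmax : max ‖p - D‖ d = ‖p - D‖ := max_eq_left hpd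
  have hrw : p + (d / dist p D) • (D - p)
      = D + (1 - d / max ‖p - D‖ d) • (p - D) := by
    rw [hmax, dist_eq_norm, sub_smul, one_smul]
    module
  rw [hrw, dist_eq_norm]
  have : D + (1 - d / max ‖p - D‖ d) • (p - D)
      - (D + (1 - d / max ‖c - D‖ d) • (c - D))
      = (1 - d / max ‖p - D‖ d) • (p - D) - (1 - d / max ‖c - D‖ d) • (c - D) := by
    abel
  rw [this]
  calc ‖(1 - d / max ‖p - D‖ d) • (p - D) - (1 - d / max ‖c - D‖ d) • (c - D)‖
      ≤ ‖(p - D) - (c - D)‖ := shrink_lipschitz d hd (p - D) (c - D)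
    _ = dist p c := by rw [dist_eq_norm]; congr 1; abel
    _ ≤ r := hc p hp
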